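/- Let B ∈ C^{n×n} with B_H ≥ 0, B_A = (B-B*)/2. For every m ∈ ℕ₀, the range of [√B_H, B_A √B_H, …, B_A^m √B_H] equals the range of [√B_H, B* √B_H, …, (B*)^m √B_H]. -/

import Mathlib

open Matrix
open scoped ComplexOrder

/-- The positive semidefinite square root of a positive semidefinite matrix
(removed from Mathlib; restored with its old definition). -/
noncomputable def Matrix.PosSemidef.sqrt {n : Type*} [Fintype n] [DecidableEq n] {𝕜 : Type*}
    [RCLike 𝕜] {A : Matrix n n 𝕜} (hA : A.PosSemidef) : Matrix n n 𝕜 :=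
  hA.1.eigenvectorUnitary.1 * diagonal ((↑) ∘ (√·) ∘ hA.1.eigenvalues) *
    (star hA.1.eigenvectorUnitary : Matrix n n 𝕜)

lemma Matrix.PosSemidef.sqrt_mul_self {n : Type*} [Fintype n] [DecidableEq n] {𝕜 : Type*}
    [RCLike 𝕜] {A : Matrix n n 𝕜} (hA : A.PosSemidef) : hA.sqrt * hA.sqrt = A := by
  unfold Matrix.PosSemidef.sqrt
  have hU : (star hA.1.eigenvectorUnitary : Matrix n n 𝕜) * hA.1.eigenvectorUnitary.1 = 1 :=
    Unitary.star_mul_self_of_mem hA.1.eigenvectorUnitary.2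
  conv_rhs => rw [hA.1.spectral_theorem, Unitary.conjStarAlgAut_apply]
  calc _ = hA.1.eigenvectorUnitary.1 * (diagonal ((↑) ∘ (√·) ∘ hA.1.eigenvalues) *
        ((star hA.1.eigenvectorUnitary : Matrix n n 𝕜) * hA.1.eigenvectorUnitary.1) *
        diagonal ((↑) ∘ (√·) ∘ hA.1.eigenvalues)) *
        (star hA.1.eigenvectorUnitary : Matrix n n 𝕜) := by simp only [mul_assoc]
    _ = _ := by
      rw [hU, mul_one, diagonal_mul_diagonal]
      congr 3
      funext i
      simp only [Function.comp_apply]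
      rw [← RCLike.ofReal_mul, Real.mul_self_sqrt (hA.eigenvalues_nonneg i)]

lemma range_sub_le' {n : ℕ} {f g : (Fin n → ℂ) →ₗ[ℂ] (Fin n → ℂ)} :
    LinearMap.range (f - g) ≤ LinearMap.range f ⊔ LinearMap.range g := by
  rintro x ⟨y, rfl⟩
  exact Submodule.sub_mem _ (Submodule.mem_sup_left ⟨y, rfl⟩)
    (Submodule.mem_sup_right ⟨y, rfl⟩)

lemma krylov_le {n : ℕ} (s A B : Matrix (Fin n) (Fin n) ℂ) (hB : B = s * s - A) :
    ∀ j : ℕ, LinearMap.range ((A ^ j * s).mulVecLin)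
      ≤ ⨆ i : Fin (j+1), LinearMap.range ((B ^ (i:ℕ) * s).mulVecLin) := by
  intro j
  induction j with
  | zero =>
      refine le_trans ?_ (le_iSup _ (0 : Fin 1))
      simp
  | succ j ih =>
      have hA : A = s * s - B := by rw [hB, sub_sub_cancel]
      have key : A ^ (j+1) * s = (s * s) * (A ^ j * s) - B * (A ^ j * s) := by
        rw [pow_succ', mul_assoc, hA, sub_mul]
      rw [key]
      have hsub : ((s * s) * (A ^ j * s) - B * (A ^ j * s)).mulVecLin
          = ((s * s) * (A ^ j * s)).mulVecLin - (B * (A ^ j * s)).mulVecLin := by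
        refine LinearMap.ext fun v => ?_
        simp only [Matrix.mulVecLin_apply, LinearMap.sub_apply, Matrix.sub_mulVec]
      rw [hsub]
      refine le_trans range_sub_le' (sup_le ?_ ?_)
      · -- range (s * s * M) ≤ range s ≤ sup at index 0
        have : (s * s) * (A ^ j * s) = s * (s * (A ^ j * s)) := by rw [mul_assoc]
        rw [this, Matrix.mulVecLin_mul, LinearMap.range_comp]
        refine le_trans (LinearMap.map_le_range) ?_
        refine le_trans ?_ (le_iSup _ (0 : Fin (j+2)))
        simp
      · rw [Matrix.mulVecLin_mul, LinearMap.range_comp]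
        refine le_trans (Submodule.map_mono ih) ?_
        rw [Submodule.map_iSup]
        refine iSup_le fun i => ?_
        rw [← LinearMap.range_comp, ← Matrix.mulVecLin_mul, ← mul_assoc, ← pow_succ']
        have hi : ((i : ℕ) + 1) < j + 2 := by omega
        exact le_trans (le_of_eq rfl) (le_iSup
          (fun k : Fin (j+2) => LinearMap.range ((B ^ (k:ℕ) * s).mulVecLin)) ⟨(i:ℕ)+1, hi⟩)

/-- The range of `[√B_H, B_A √B_H, …, B_A^m √B_H]` equals the range of
`[√B_H, B* √B_H, …, (B*)^m √B_H]`. -/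
theorem kalman_range_BA_eq_range_Bstar {n : ℕ} (B : Matrix (Fin n) (Fin n) ℂ)
    (hBH : ((1/2 : ℂ) • (B + Bᴴ)).PosSemidef) (m : ℕ) :
    (⨆ j : Fin (m+1),
        LinearMap.range ((((1/2 : ℂ) • (B - Bᴴ)) ^ (j : ℕ) * hBH.sqrt).mulVecLin))
      = ⨆ j : Fin (m+1),
        LinearMap.range ((Bᴴ ^ (j : ℕ) * hBH.sqrt).mulVecLin) := by
  set s := hBH.sqrt with hs
  have hss : s * s = (1/2 : ℂ) • (B + Bᴴ) := hBH.sqrt_mul_self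
  have h1 : Bᴴ = s * s - (1/2 : ℂ) • (B - Bᴴ) := by
    rw [hss]; rw [smul_sub, smul_add]; module
  have h2 : (1/2 : ℂ) • (B - Bᴴ) = s * s - Bᴴ := by
    rw [hss]; rw [smul_sub, smul_add]; module
  apply le_antisymm
  · refine iSup_le fun j => ?_
    refine le_trans (krylov_le s _ _ h1 (j:ℕ)) (iSup_le fun i => ?_)
    have hi : (i : ℕ) < m + 1 := by omega
    exact le_iSup (fun k : Fin (m+1) => LinearMap.range ((Bᴴ ^ (k:ℕ) * s).mulVecLin)) ⟨i, hi⟩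
  · refine iSup_le fun j => ?_
    refine le_trans (krylov_le s _ _ h2 (j:ℕ)) (iSup_le fun i => ?_)
    have hi : (i : ℕ) < m + 1 := by omega
    exact le_iSup (fun k : Fin (m+1) =>
      LinearMap.range ((((1/2 : ℂ) • (B - Bᴴ)) ^ (k:ℕ) * s).mulVecLin)) ⟨i, hi⟩
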